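/- (Schur concavity of Shannon entropy.) If p and q are probability vectors of length n and p majorizes q (p ≻ q), then H(p) ≤ H(q). -/

import Mathlib

/-- The Shannon entropy `H(p) = −Σ_i p_i log p_i` (with `0·log 0 = 0`,
which holds since `Real.log 0 = 0`). -/
noncomputable def shannonEntropy {n : ℕ} (p : Fin n → ℝ) : ℝ :=
  -∑ i, p i * Real.log (p i)

/-- The sum of the `k` largest entries of `p`, i.e. the maximum of the sums of `p`
over subsets of cardinality `k` (for `k ≤ n` this supremum is a maximum). -/
noncomputable def sumKLargest {n : ℕ} (p : Fin n → ℝ) (k : ℕ) : ℝ :=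
  sSup {x : ℝ | ∃ A : Finset (Fin n), A.card = k ∧ x = ∑ i ∈ A, p i}

/-- `p` majorizes `q`: for every `k`, the sum of the `k` largest entries of `p` is at
least the sum of the `k` largest entries of `q`. -/
def Majorizes {n : ℕ} (p q : Fin n → ℝ) : Prop :=
  ∀ k ≤ n, sumKLargest q k ≤ sumKLargest p k

namespace SchurAux

lemma strictMono_val_le {k n : ℕ} {u : Fin k → Fin n} (hu : StrictMono u) (j : Fin k) :
    (j : ℕ) ≤ (u j : ℕ) := by
  have H : ∀ m : ℕ, ∀ j : Fin k, (j : ℕ) = m → m ≤ (u j : ℕ) := by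
    intro m
    induction m with
    | zero => exact fun j _ => Nat.zero_le _
    | succ m ih =>
      intro j hj
      have hm : m < k := by omega
      have h1 : u ⟨m, hm⟩ < u j := hu (by simp [Fin.lt_def]; omega)
      have h2 := ih ⟨m, hm⟩ rfl
      rw [Fin.lt_def] at h1
      omega
  exact H _ j rfl

lemma strictMono_val_le' {k n : ℕ} {u : Fin k → Fin n} (hu : StrictMono u) (j : Fin k) :
    (u j : ℕ) ≤ n - k + (j : ℕ) := by
  have hw : StrictMono (fun i : Fin k => (u i.rev).rev) := by
    intro a b hab
    simp only [Fin.rev_lt_rev]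
    exact hu (by simpa [Fin.rev_lt_rev] using hab)
  have := strictMono_val_le hw j.rev
  simp only [Fin.rev_rev, Fin.val_rev] at this
  have h1 : (u j : ℕ) < n := (u j).isLt
  have h2 : (j : ℕ) < k := j.isLt
  omega

def topSet (n k : ℕ) : Finset (Fin n) := Finset.univ.filter (fun i => n - k ≤ i.val)

noncomputable def topSum {n : ℕ} (g : Fin n → ℝ) (k : ℕ) : ℝ := ∑ i ∈ topSet n k, g i

def topEmb (n k : ℕ) (hk : k ≤ n) : Fin k ↪ Fin n :=
  ⟨fun j => ⟨n - k + j.val, by omega⟩, by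
    intro a b hab
    have h := congrArg Fin.val hab
    simp only at h
    apply Fin.ext
    omega⟩

@[simp] lemma topEmb_apply {n k : ℕ} (hk : k ≤ n) (j : Fin k) :
    (topEmb n k hk j : ℕ) = n - k + j.val := rfl

lemma topSet_eq_map {n k : ℕ} (hk : k ≤ n) :
    topSet n k = Finset.univ.map (topEmb n k hk) := by
  ext i
  simp only [topSet, Finset.mem_filter, Finset.mem_univ, true_and, Finset.mem_map,
    true_and]
  constructor
  · intro h
    exact ⟨⟨i.val - (n - k), by omega⟩, by apply Fin.ext; simp only [topEmb_apply, Fin.val_mk]; omega⟩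
  · rintro ⟨j, rfl⟩
    simp only [topEmb_apply]; omega

lemma card_topSet {n k : ℕ} (hk : k ≤ n) : (topSet n k).card = k := by
  rw [topSet_eq_map hk, Finset.card_map, Finset.card_univ, Fintype.card_fin]

lemma topSum_eq {n k : ℕ} (hk : k ≤ n) (g : Fin n → ℝ) :
    topSum g k = ∑ j : Fin k, g (topEmb n k hk j) := by
  rw [topSum, topSet_eq_map hk, Finset.sum_map]

lemma sum_le_topSum {n k : ℕ} {g : Fin n → ℝ} (hg : Monotone g) {A : Finset (Fin n)}
    (hA : A.card = k) (hk : k ≤ n) : ∑ i ∈ A, g i ≤ topSum g k := by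
  rw [topSum_eq hk]
  have u := A.orderIsoOfFin hA
  have hu : StrictMono (fun j : Fin k => ((u j : A) : Fin n)) :=
    fun a b hab => u.strictMono hab
  have hsum : ∑ i ∈ A, g i = ∑ j : Fin k, g ((u j : A) : Fin n) := by
    rw [← Finset.sum_coe_sort A g]
    exact (Equiv.sum_comp u.toEquiv (fun a : A => g (a : Fin n))).symm
  rw [hsum]
  apply Finset.sum_le_sum
  intro j _
  apply hg
  rw [Fin.le_def, topEmb_apply]
  exact strictMono_val_le' hu j

lemma subset_setOf {n k : ℕ} (p : Fin n → ℝ) (σ : Equiv.Perm (Fin n)) :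
    {x : ℝ | ∃ A : Finset (Fin n), A.card = k ∧ x = ∑ i ∈ A, (p ∘ σ) i} ⊆
    {x : ℝ | ∃ A : Finset (Fin n), A.card = k ∧ x = ∑ i ∈ A, p i} := by
  rintro x ⟨A, hA, rfl⟩
  refine ⟨A.map σ.toEmbedding, by rw [Finset.card_map, hA], ?_⟩
  rw [Finset.sum_map]
  rfl

lemma sumKLargest_comp {n k : ℕ} (p : Fin n → ℝ) (σ : Equiv.Perm (Fin n)) :
    sumKLargest (p ∘ σ) k = sumKLargest p k := by
  unfold sumKLargest
  congr 1
  apply Set.Subset.antisymm (subset_setOf p σ)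
  have h := subset_setOf (k := k) (p ∘ σ) σ.symm
  have he : (p ∘ σ) ∘ σ.symm = p := by
    funext i; simp
  rwa [he] at h

lemma sumKLargest_eq_topSum {n k : ℕ} {g : Fin n → ℝ} (hg : Monotone g) (hk : k ≤ n) :
    sumKLargest g k = topSum g k := by
  apply IsGreatest.csSup_eq
  constructor
  · exact ⟨topSet n k, card_topSet hk, rfl⟩
  · rintro x ⟨A, hA, rfl⟩
    exact sum_le_topSum hg hA hk

/-- prefix + top complement = total -/
lemma prefix_add_topSum {n k : ℕ} (hk : k ≤ n) (x : Fin n → ℝ) :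
    (∑ i ∈ Finset.univ.filter (fun i : Fin n => i.val < k), x i) + topSum x (n - k) = ∑ i, x i := by
  have h1 : topSet n (n - k) = Finset.univ.filter (fun i : Fin n => ¬ i.val < k) := by
    ext i
    simp only [topSet, Finset.mem_filter, Finset.mem_univ, true_and]
    omega
  rw [topSum, h1]
  exact Finset.sum_filter_add_sum_filter_not _ _ _

lemma prefix_eq {n k : ℕ} (hk : k ≤ n) (x : Fin n → ℝ) :
    ∑ i ∈ Finset.range k, (if hi : i < n then x ⟨i, hi⟩ else 0) =
      ∑ i ∈ Finset.univ.filter (fun i : Fin n => i.val < k), x i := by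
  have h1 : Finset.range k = (Finset.range n).filter (· < k) := by
    ext i; simp; omega
  rw [h1, Finset.sum_filter, ← Fin.sum_univ_eq_sum_range
    (fun i => if i < k then (if hi : i < n then x ⟨i, hi⟩ else 0) else 0) n,
    Finset.sum_filter]
  apply Finset.sum_congr rfl
  intro i _
  by_cases h : i.val < k <;> simp [h, i.isLt]

/-- Tangent line inequality for `x log x` at `b > 0`, valid for `a ≥ 0`. -/
lemma tangent {a b : ℝ} (ha : 0 ≤ a) (hb : 0 < b) :
    (Real.log b + 1) * (a - b) ≤ a * Real.log a - b * Real.log b := by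
  rcases eq_or_lt_of_le ha with h | h
  · subst h
    simp only [Real.log_zero, zero_mul]
    nlinarith [hb.le]
  · have key := Real.log_le_sub_one_of_pos (div_pos hb h)
    rw [Real.log_div hb.ne' h.ne'] at key
    have h2 : a * (Real.log b - Real.log a) ≤ a * (b / a - 1) :=
      mul_le_mul_of_nonneg_left key h.le
    have h3 : a * (b / a) = b := mul_div_cancel₀ b h.ne'
    nlinarith

lemma core {n : ℕ} (g h : Fin n → ℝ) (hgm : Monotone g) (hhm : Monotone h)
    (hg0 : ∀ i, 0 ≤ g i) (hg1 : ∑ i, g i = 1)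
    (hh0 : ∀ i, 0 ≤ h i) (hh1 : ∑ i, h i = 1)
    (M : ∀ k ≤ n, topSum h k ≤ topSum g k) :
    ∑ i, h i * Real.log (h i) ≤ ∑ i, g i * Real.log (g i) := by
  set G : ℕ → ℝ := fun i => if hi : i < n then g ⟨i, hi⟩ else 0 with hG
  set H : ℕ → ℝ := fun i => if hi : i < n then h ⟨i, hi⟩ else 0 with hH
  set D : ℕ → ℝ := fun i => G i - H i with hD
  set A : ℕ → ℝ := fun i => (if hi : i < n then Real.log (h ⟨i, hi⟩) else 0) + 1 with hA
  have prefixG : ∀ k ≤ n, ∑ i ∈ Finset.range k, G i = 1 - topSum g (n - k) := by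
    intro k hk
    rw [hG, prefix_eq hk g, eq_sub_iff_add_eq, prefix_add_topSum hk g, hg1]
  have prefixH : ∀ k ≤ n, ∑ i ∈ Finset.range k, H i = 1 - topSum h (n - k) := by
    intro k hk
    rw [hH, prefix_eq hk h, eq_sub_iff_add_eq, prefix_add_topSum hk h, hh1]
  have hEsplit : ∀ k, ∑ i ∈ Finset.range k, D i =
      (∑ i ∈ Finset.range k, G i) - (∑ i ∈ Finset.range k, H i) := by
    intro k
    simp only [hD]
    rw [Finset.sum_sub_distrib]
  have hEle : ∀ k ≤ n, ∑ i ∈ Finset.range k, D i ≤ 0 := by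
    intro k hk
    rw [hEsplit, prefixG k hk, prefixH k hk]
    have := M (n - k) (Nat.sub_le _ _)
    linarith
  have hEn : ∑ i ∈ Finset.range n, D i = 0 := by
    rw [hEsplit, prefixG n le_rfl, prefixH n le_rfl]
    have h0 : topSet n (n - n) = (∅ : Finset (Fin n)) := by
      ext i
      simp only [topSet, Finset.mem_filter, Finset.mem_univ, true_and, Finset.notMem_empty,
        iff_false]
      have := i.isLt
      omega
    rw [topSum, topSum, h0]
    simp
  have Z : ∀ i : Fin n, h i = 0 → g i = 0 := by
    intro i hi
    have hk : i.val + 1 ≤ n := i.isLt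
    have hhpre : ∑ j ∈ Finset.univ.filter (fun j : Fin n => j.val < i.val + 1), h j = 0 := by
      apply Finset.sum_eq_zero
      intro j hj
      simp only [Finset.mem_filter] at hj
      have h1 : h j ≤ h i := hhm (by rw [Fin.le_def]; omega)
      have h2 := hh0 j
      linarith
    have h1 : topSum h (n - (i.val + 1)) = 1 := by
      have := prefix_add_topSum hk h
      rw [hhpre, hh1] at this
      linarith
    have h2 := M (n - (i.val + 1)) (Nat.sub_le _ _)
    rw [h1] at h2
    have h3 := prefix_add_topSum hk g
    rw [hg1] at h3
    have h4 : ∑ j ∈ Finset.univ.filter (fun j : Fin n => j.val < i.val + 1), g j ≤ 0 := by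
      linarith
    have h5 : g i ≤ ∑ j ∈ Finset.univ.filter (fun j : Fin n => j.val < i.val + 1), g j := by
      apply Finset.single_le_sum (fun j _ => hg0 j)
      simp
    have := hg0 i
    linarith
  have hterm : ∀ i : Fin n,
      A i.val * D i.val ≤ g i * Real.log (g i) - h i * Real.log (h i) := by
    intro i
    have hAi : A i.val = Real.log (h i) + 1 := by simp [hA, i.isLt]
    have hDi : D i.val = g i - h i := by simp [hD, hG, hH, i.isLt]
    rw [hAi, hDi]
    rcases eq_or_lt_of_le (hh0 i) with h0 | hpos
    · have hgz : g i = 0 := Z i h0.symm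
      rw [← h0, hgz]
      simp
    · exact tangent (hg0 i) hpos
  have habel := Finset.sum_range_by_parts A D n
  simp only [smul_eq_mul] at habel
  have hterm2 : ∀ i ∈ Finset.range (n - 1),
      (A (i + 1) - A i) * ∑ j ∈ Finset.range (i + 1), D j ≤ 0 := by
    intro i hi
    simp only [Finset.mem_range] at hi
    have hin : i + 1 < n := by omega
    have hEle' := hEle (i + 1) (by omega)
    rcases eq_or_lt_of_le hEle' with hE0 | hEneg
    · rw [hE0, mul_zero]
    · have hhpos : 0 < h ⟨i, by omega⟩ := by
        rcases eq_or_lt_of_le (hh0 ⟨i, by omega⟩) with h0 | hp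
        · exfalso
          have hzero : ∀ m ∈ Finset.range (i + 1), D m = 0 := by
            intro m hm
            simp only [Finset.mem_range] at hm
            have hmn : m < n := by omega
            have hhm0 : h ⟨m, hmn⟩ = 0 := by
              have hle1 : h ⟨m, hmn⟩ ≤ h ⟨i, by omega⟩ :=
                hhm (Fin.mk_le_mk.mpr (by omega))
              have hle2 := hh0 ⟨m, hmn⟩
              linarith [h0]
            have hgm0 : g ⟨m, hmn⟩ = 0 := Z _ hhm0
            simp [hD, hG, hH, hmn, hhm0, hgm0]
          have hcontr : ∑ j ∈ Finset.range (i + 1), D j = 0 := Finset.sum_eq_zero hzero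
          linarith
        · exact hp
      have hmono : A i ≤ A (i + 1) := by
        have hle : h ⟨i, by omega⟩ ≤ h ⟨i + 1, hin⟩ := hhm (Fin.mk_le_mk.mpr (by omega))
        simp only [hA, dif_pos hin, dif_pos (show i < n by omega)]
        have := Real.log_le_log hhpos hle
        linarith
      exact mul_nonpos_of_nonneg_of_nonpos (by linarith) hEneg.le
  have hsum_nonneg : 0 ≤ ∑ i ∈ Finset.range n, A i * D i := by
    rw [habel, hEn]
    have hs : ∑ i ∈ Finset.range (n - 1), (A (i + 1) - A i) * ∑ j ∈ Finset.range (i + 1), D j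
        ≤ 0 := Finset.sum_nonpos hterm2
    simp only [mul_zero]
    linarith
  have hfin : ∑ i ∈ Finset.range n, A i * D i = ∑ i : Fin n, A i.val * D i.val :=
    (Fin.sum_univ_eq_sum_range (fun i => A i * D i) n).symm
  have hlast : ∑ i : Fin n, A i.val * D i.val ≤
      ∑ i : Fin n, (g i * Real.log (g i) - h i * Real.log (h i)) :=
    Finset.sum_le_sum (fun i _ => hterm i)
  rw [Finset.sum_sub_distrib] at hlast
  rw [hfin] at hsum_nonneg
  linarith

end SchurAux

/-- **Schur concavity of the Shannon entropy.**  If the probability vector `p`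
majorizes the probability vector `q`, then `H(p) ≤ H(q)`. -/
theorem shannonEntropy_le_of_majorizes
    (n : ℕ) (p q : Fin n → ℝ)
    (hp0 : ∀ i, 0 ≤ p i) (hp1 : ∑ i, p i = 1)
    (hq0 : ∀ i, 0 ≤ q i) (hq1 : ∑ i, q i = 1)
    (hmaj : Majorizes p q) :
    shannonEntropy p ≤ shannonEntropy q := by
  classical
  set σp := Tuple.sort p with hσp
  set σq := Tuple.sort q with hσq
  set g : Fin n → ℝ := p ∘ σp with hg
  set h : Fin n → ℝ := q ∘ σq with hh
  have hgm : Monotone g := Tuple.monotone_sort p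
  have hhm : Monotone h := Tuple.monotone_sort q
  have hg0 : ∀ i, 0 ≤ g i := fun i => hp0 _
  have hh0 : ∀ i, 0 ≤ h i := fun i => hq0 _
  have hg1 : ∑ i, g i = 1 := by rw [hg]; exact (Equiv.sum_comp σp p).trans hp1
  have hh1 : ∑ i, h i = 1 := by rw [hh]; exact (Equiv.sum_comp σq q).trans hq1
  have M : ∀ k ≤ n, SchurAux.topSum h k ≤ SchurAux.topSum g k := by
    intro k hk
    rw [← SchurAux.sumKLargest_eq_topSum hhm hk, ← SchurAux.sumKLargest_eq_topSum hgm hk,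
      hg, hh, SchurAux.sumKLargest_comp p σp, SchurAux.sumKLargest_comp q σq]
    exact hmaj k hk
  have hcore := SchurAux.core g h hgm hhm hg0 hg1 hh0 hh1 M
  have hEp : shannonEntropy p = -∑ i, g i * Real.log (g i) := by
    rw [shannonEntropy, hg]
    congr 1
    exact (Equiv.sum_comp σp (fun j => p j * Real.log (p j))).symm
  have hEq : shannonEntropy q = -∑ i, h i * Real.log (h i) := by
    rw [shannonEntropy, hh]
    congr 1
    exact (Equiv.sum_comp σq (fun j => q j * Real.log (q j))).symm
  rw [hEp, hEq]
  linarith
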